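/- Let F(x) = 1 − (2/Γ(Q)) (c x)^(Q/2) K_Q(2√(c x)) for x > 0, with Q ≥ 2 an integer and c > 0. Then lim_{x→0⁺} F(x)/x = c/(Q−1). -/

import Mathlib

open MeasureTheory Real Set Filter Topology

/-- The modified Bessel function of the second kind `K_ν(x)`. -/
noncomputable def besselK (ν x : ℝ) : ℝ :=
  ∫ t in Set.Ioi (0 : ℝ), Real.exp (-x * Real.cosh t) * Real.cosh (ν * t)

namespace CascadedAux

lemma phi_integrable (ν : ℝ) (hν : 0 < ν) {a : ℝ} (ha : 0 < a) :
    IntegrableOn (fun t => t ^ (ν - 1) * Real.exp (-t - a / t)) (Ioi (0:ℝ)) := by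
  have hG := Real.GammaIntegral_convergent hν
  refine hG.mono' ?_ ?_
  · refine ContinuousOn.aestronglyMeasurable ?_ measurableSet_Ioi
    refine ContinuousOn.mul ?_ ?_
    · exact fun t ht => (Real.continuousAt_rpow_const t _ (Or.inl (ne_of_gt ht))).continuousWithinAt
    · refine Real.continuous_exp.comp_continuousOn ?_
      exact (continuousOn_id.neg).sub (continuousOn_const.div continuousOn_id
        (fun t ht => ne_of_gt ht))
  · rw [ae_restrict_iff' measurableSet_Ioi]
    filter_upwards with t
    intro ht
    have ht' : (0:ℝ) < t := ht
    have h1 : (0:ℝ) ≤ t ^ (ν - 1) := Real.rpow_nonneg ht'.le _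
    have h2 : Real.exp (-t - a / t) ≤ Real.exp (-t) := by
      apply Real.exp_le_exp.mpr
      have : 0 ≤ a / t := by positivity
      linarith
    rw [Real.norm_eq_abs, abs_of_nonneg (by positivity)]
    calc t ^ (ν - 1) * Real.exp (-t - a / t) ≤ t ^ (ν - 1) * Real.exp (-t) :=
          mul_le_mul_of_nonneg_left h2 h1
      _ = Real.exp (-t) * t ^ (ν - 1) := by ring

lemma image_exp {sa : ℝ} (hsa : 0 < sa) :
    (fun s => sa * Real.exp s) '' Ioi 0 = Ioi sa := by
  ext u
  simp only [mem_image, mem_Ioi]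
  constructor
  · rintro ⟨s, hs, rfl⟩
    have h1 : (1:ℝ) < Real.exp s := Real.one_lt_exp_iff.mpr hs
    nlinarith
  · intro hu
    refine ⟨Real.log (u / sa), Real.log_pos ((one_lt_div hsa).mpr hu), ?_⟩
    rw [Real.exp_log (div_pos (hsa.trans hu) hsa)]
    field_simp

lemma image_inv {a : ℝ} (ha : 0 < a) :
    (fun v => a / v) '' Ioo 0 (Real.sqrt a) = Ioi (Real.sqrt a) := by
  have hsa : 0 < Real.sqrt a := Real.sqrt_pos.mpr ha
  have hsq : Real.sqrt a * Real.sqrt a = a := Real.mul_self_sqrt ha.le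
  ext u
  simp only [mem_image, mem_Ioo, mem_Ioi]
  constructor
  · rintro ⟨v, ⟨hv0, hvs⟩, rfl⟩
    rw [lt_div_iff₀ hv0]
    nlinarith
  · intro hu
    have hu0 : 0 < u := hsa.trans hu
    refine ⟨a / u, ⟨by positivity, ?_⟩, by field_simp⟩
    rw [div_lt_iff₀ hu0]
    nlinarith

/-- Key integral identity: `(√a)^ν K_ν(2√a) = (1/2) ∫₀^∞ t^(ν-1) e^(-t-a/t) dt`. -/
lemma key_identity (ν : ℝ) (hν : 1 ≤ ν) {a : ℝ} (ha : 0 < a) :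
    Real.sqrt a ^ ν * besselK ν (2 * Real.sqrt a)
      = (1/2) * ∫ t in Ioi (0:ℝ), t ^ (ν - 1) * Real.exp (-t - a / t) := by
  set sa := Real.sqrt a with hsa_def
  have hsa : 0 < sa := Real.sqrt_pos.mpr ha
  have hsq : sa * sa = a := Real.mul_self_sqrt ha.le
  set g : ℝ → ℝ := fun u =>
    Real.exp (-u - a / u) * (u ^ ν / sa ^ ν + sa ^ ν / u ^ ν) / (2 * u) with hg_def
  -- Step 1: besselK ν (2√a) = ∫_{Ioi sa} g
  have step1 : besselK ν (2 * sa) = ∫ u in Ioi sa, g u := by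
    rw [besselK, ← image_exp hsa,
      integral_image_eq_integral_abs_deriv_smul measurableSet_Ioi
        (fun s _ => ((Real.hasDerivAt_exp s).const_mul sa).hasDerivWithinAt)
        (fun s _ t _ h => by
          have := mul_left_cancel₀ (ne_of_gt hsa) h
          exact Real.exp_injective this) g]
    refine setIntegral_congr_fun measurableSet_Ioi (fun s _ => ?_)
    have hes : (0:ℝ) < Real.exp s := Real.exp_pos s
    have hu : (0:ℝ) < sa * Real.exp s := by positivity
    have e1 : a / (sa * Real.exp s) = sa * Real.exp (-s) := by
      rw [div_eq_iff (ne_of_gt hu), Real.exp_neg, ← hsq]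
      field_simp
    have e2 : (sa * Real.exp s) ^ ν / sa ^ ν = Real.exp (s * ν) := by
      rw [Real.mul_rpow hsa.le hes.le, Real.exp_mul]
      field_simp [ne_of_gt (Real.rpow_pos_of_pos hsa ν)]
    have e3 : sa ^ ν / (sa * Real.exp s) ^ ν = Real.exp (-(s * ν)) := by
      rw [Real.mul_rpow hsa.le hes.le, Real.exp_neg, Real.exp_mul]
      rw [eq_comm, inv_eq_one_div, div_eq_div_iff (by positivity) (by positivity)]
      ring
    show Real.exp (-(2 * sa) * Real.cosh s) * Real.cosh (ν * s)
        = |sa * Real.exp s| • g (sa * Real.exp s)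
    rw [smul_eq_mul, abs_of_pos hu, hg_def]
    simp only []
    rw [e1, e2, e3, Real.cosh_eq, Real.cosh_eq,
      show -(2 * sa) * ((Real.exp s + Real.exp (-s)) / 2)
          = -(sa * Real.exp s) - sa * Real.exp (-s) by ring,
      show ν * s = s * ν by ring]
    field_simp
  -- φ and ψ
  set φ : ℝ → ℝ := fun t => t ^ (ν - 1) * Real.exp (-t - a / t) with hφ_def
  set ψ : ℝ → ℝ := fun u => a ^ ν / u ^ (ν + 1) * Real.exp (-u - a / u) with hψ_def
  have hφ_int : IntegrableOn φ (Ioi (0:ℝ)) := phi_integrable ν (by linarith) ha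
  have hφ_int' : IntegrableOn φ (Ioi sa) := hφ_int.mono_set (Ioi_subset_Ioi hsa.le)
  have hφ_int'' : IntegrableOn φ (Ioo 0 sa) := hφ_int.mono_set Ioo_subset_Ioi_self
  have hψ_int : IntegrableOn ψ (Ioi sa) := by
    have hexp : IntegrableOn (fun u : ℝ => a ^ ν / sa ^ (ν + 1) * Real.exp (-u)) (Ioi sa) := by
      have h := (exp_neg_integrableOn_Ioi sa (b := 1) one_pos).const_mul (a ^ ν / sa ^ (ν + 1))
      refine IntegrableOn.congr_fun h (fun u _ => by norm_num) measurableSet_Ioi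
    refine hexp.mono' ?_ ?_
    · refine ContinuousOn.aestronglyMeasurable ?_ measurableSet_Ioi
      refine ContinuousOn.mul ?_ ?_
      · refine continuousOn_const.div ?_ (fun u hu => ?_)
        · exact fun u hu => (Real.continuousAt_rpow_const u _
            (Or.inl (ne_of_gt (hsa.trans hu)))).continuousWithinAt
        · exact ne_of_gt (Real.rpow_pos_of_pos (hsa.trans hu) _)
      · refine Real.continuous_exp.comp_continuousOn ?_
        exact (continuousOn_id.neg).sub (continuousOn_const.div continuousOn_id
          (fun u hu => ne_of_gt (hsa.trans hu)))
    · rw [ae_restrict_iff' measurableSet_Ioi]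
      filter_upwards with u
      intro hu
      have hu' : sa < u := hu
      have hu0 : 0 < u := hsa.trans hu'
      have h1 : u ^ (ν + 1) ≠ 0 := ne_of_gt (Real.rpow_pos_of_pos hu0 _)
      rw [Real.norm_eq_abs, abs_of_nonneg (by positivity)]
      have hmono : sa ^ (ν + 1) ≤ u ^ (ν + 1) :=
        Real.rpow_le_rpow hsa.le hu'.le (by linarith)
      have h2 : a ^ ν / u ^ (ν + 1) ≤ a ^ ν / sa ^ (ν + 1) := by
        apply div_le_div_of_nonneg_left (Real.rpow_nonneg ha.le _)
          (Real.rpow_pos_of_pos hsa _) hmono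
      have h3 : Real.exp (-u - a / u) ≤ Real.exp (-u) := by
        apply Real.exp_le_exp.mpr
        have : 0 ≤ a / u := by positivity
        linarith
      exact mul_le_mul h2 h3 (Real.exp_pos _).le (by positivity)
  -- Step 2: sa^ν * g = (1/2)(φ + ψ) on Ioi sa
  have step2 : ∫ u in Ioi sa, sa ^ ν * g u
      = (1/2) * ((∫ u in Ioi sa, φ u) + ∫ u in Ioi sa, ψ u) := by
    rw [← integral_add hφ_int' hψ_int, ← integral_const_mul]
    refine setIntegral_congr_fun measurableSet_Ioi (fun u hu => ?_)
    have hu0 : 0 < u := hsa.trans hu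
    have hsaν : (0:ℝ) < sa ^ ν := Real.rpow_pos_of_pos hsa ν
    have huν : (0:ℝ) < u ^ ν := Real.rpow_pos_of_pos hu0 ν
    have h1 : u ^ (ν - 1) = u ^ ν / u := by
      rw [Real.rpow_sub hu0, Real.rpow_one]
    have h2 : u ^ (ν + 1) = u ^ ν * u := by
      rw [Real.rpow_add hu0, Real.rpow_one]
    have h3 : sa ^ ν * sa ^ ν = a ^ ν := by
      rw [← Real.mul_rpow hsa.le hsa.le, hsq]
    simp only [hg_def, hφ_def, hψ_def]
    rw [h1, h2, ← h3]
    field_simp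
  -- Step 3: ∫_{Ioi sa} ψ = ∫_{Ioo 0 sa} φ
  have step3 : (∫ u in Ioi sa, ψ u) = ∫ v in Ioo 0 sa, φ v := by
    rw [← image_inv ha, ← hsa_def,
      integral_image_eq_integral_abs_deriv_smul measurableSet_Ioo
        (f' := fun v => a * -((v:ℝ)^2)⁻¹)
        (fun v hv => ((hasDerivAt_inv (ne_of_gt hv.1)).const_mul a).hasDerivWithinAt.congr
          (fun w _ => by rw [div_eq_mul_inv]) (by rw [div_eq_mul_inv]))
        (fun v hv w hw h => by
          have hv0 : v ≠ 0 := ne_of_gt hv.1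
          have hw0 : w ≠ 0 := ne_of_gt hw.1
          rw [div_eq_div_iff hv0 hw0] at h
          exact (mul_left_cancel₀ (ne_of_gt ha) h).symm) ψ]
    refine setIntegral_congr_fun measurableSet_Ioo (fun v hv => ?_)
    have hv0 : 0 < v := hv.1
    have habs : |a * -((v:ℝ)^2)⁻¹| = a / v ^ 2 := by
      rw [mul_comm, abs_mul, abs_neg, abs_inv, abs_of_pos (by positivity : (0:ℝ) < v^2),
        abs_of_pos ha]
      rw [inv_mul_eq_div]
    rw [smul_eq_mul, habs]
    simp only [hψ_def, hφ_def]
    have e1 : a / (a / v) = v := by field_simp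
    have e2 : (a / v) ^ (ν + 1) = a ^ (ν + 1) / v ^ (ν + 1) :=
      Real.div_rpow ha.le hv0.le _
    have e3 : a ^ (ν + 1) = a ^ ν * a := by rw [Real.rpow_add ha, Real.rpow_one]
    have e4 : v ^ (ν + 1) = v ^ (ν - 1) * v ^ (2:ℕ) := by
      rw [← Real.rpow_natCast v 2, ← Real.rpow_add hv0]
      congr 1
      ring
    have haν : (0:ℝ) < a ^ ν := Real.rpow_pos_of_pos ha ν
    have hvν : (0:ℝ) < v ^ (ν - 1) := Real.rpow_pos_of_pos hv0 _
    rw [e1, e2, e3, e4, show -(a / v) - v = -v - a / v by ring]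
    field_simp
  -- Step 4: combine
  have hφ_intIci : IntegrableOn φ (Ici sa) :=
    hφ_int.mono_set (fun x hx => lt_of_lt_of_le hsa hx)
  have step4 : (∫ v in Ioo 0 sa, φ v) + (∫ u in Ioi sa, φ u) = ∫ t in Ioi (0:ℝ), φ t := by
    have hIci : (∫ u in Ici sa, φ u) = ∫ u in Ioi sa, φ u := integral_Ici_eq_integral_Ioi
    have hdisj : Disjoint (Ioo (0:ℝ) sa) (Ici sa) :=
      Set.disjoint_left.mpr (fun x hx hx' => absurd hx.2 (not_lt.mpr hx'))
    rw [← Ioo_union_Ici_eq_Ioi hsa, setIntegral_union hdisj measurableSet_Ici hφ_int''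
        hφ_intIci, hIci]
  calc Real.sqrt a ^ ν * besselK ν (2 * Real.sqrt a)
      = sa ^ ν * ∫ u in Ioi sa, g u := by rw [← hsa_def, step1]
    _ = ∫ u in Ioi sa, sa ^ ν * g u := (integral_const_mul _ _).symm
    _ = (1/2) * ((∫ u in Ioi sa, φ u) + ∫ u in Ioi sa, ψ u) := step2
    _ = (1/2) * ((∫ u in Ioi sa, φ u) + ∫ v in Ioo 0 sa, φ v) := by rw [step3]
    _ = (1/2) * ∫ t in Ioi (0:ℝ), φ t := by rw [← step4, add_comm]

end CascadedAux

/-- For `Q ≥ 2` and `c > 0`, the CDF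
`F(x) = 1 − (2/Γ(Q))(cx)^(Q/2) K_Q(2√(cx))` satisfies
`lim_{x→0⁺} F(x)/x = c/(Q−1)`. -/
theorem cascaded_cdf_asymptotic (Q : ℕ) (hQ : 2 ≤ Q) (c : ℝ) (hc : 0 < c) :
    Tendsto (fun x : ℝ =>
        (1 - (2 / Real.Gamma Q) * (c * x) ^ ((Q : ℝ) / 2) *
          besselK (Q : ℝ) (2 * Real.sqrt (c * x))) / x)
      (nhdsWithin 0 (Set.Ioi 0)) (nhds (c / ((Q : ℝ) - 1))) := by
  set ν : ℝ := (Q : ℝ) with hν_def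
  have hν2 : (2:ℝ) ≤ ν := by
    show (2:ℝ) ≤ (Q:ℝ)
    exact_mod_cast hQ
  have hν0 : (0:ℝ) < ν := by linarith
  have hν1 : (1:ℝ) ≤ ν := by linarith
  have hν1' : (0:ℝ) < ν - 1 := by linarith
  have hΓpos : 0 < Real.Gamma ν := Real.Gamma_pos_of_pos hν0
  have hΓ1pos : 0 < Real.Gamma (ν - 1) := Real.Gamma_pos_of_pos hν1'
  set Ffun : ℝ → ℝ → ℝ := fun x t =>
    t ^ (ν - 1) * Real.exp (-t) * (1 - Real.exp (-(c * x) / t)) / x with hFfun_def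
  -- Dominated convergence
  have hDC : Tendsto (fun x => ∫ t in Ioi (0:ℝ), Ffun x t) (nhdsWithin 0 (Set.Ioi 0))
      (nhds (∫ t in Ioi (0:ℝ), c * (Real.exp (-t) * t ^ (ν - 1 - 1)))) := by
    refine tendsto_integral_filter_of_dominated_convergence
      (fun t => c * (Real.exp (-t) * t ^ (ν - 1 - 1))) ?_ ?_ ?_ ?_
    · filter_upwards with x
      refine ContinuousOn.aestronglyMeasurable ?_ measurableSet_Ioi
      refine ContinuousOn.div_const ?_ x
      refine ContinuousOn.mul (ContinuousOn.mul ?_ ?_) ?_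
      · exact fun t ht =>
          (Real.continuousAt_rpow_const t _ (Or.inl (ne_of_gt ht))).continuousWithinAt
      · exact (Real.continuous_exp.comp continuous_neg).continuousOn
      · refine continuousOn_const.sub (Real.continuous_exp.comp_continuousOn ?_)
        exact continuousOn_const.div continuousOn_id (fun t ht => ne_of_gt ht)
    · filter_upwards [self_mem_nhdsWithin] with x hx
      rw [ae_restrict_iff' measurableSet_Ioi]
      filter_upwards with t ht
      have hx0 : 0 < x := hx
      have ht0 : 0 < t := ht
      have hcx : 0 < c * x := mul_pos hc hx0
      have hd : (0:ℝ) ≤ c * x / t := by positivity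
      have hle1 : Real.exp (-(c * x) / t) ≤ 1 := by
        have h := Real.exp_le_exp.mpr (show -(c * x) / t ≤ 0 by rw [neg_div]; linarith)
        rwa [Real.exp_zero] at h
      have h0 : 0 ≤ 1 - Real.exp (-(c * x) / t) := by linarith
      have h2 : 1 - Real.exp (-(c * x) / t) ≤ c * x / t := by
        have h := Real.add_one_le_exp (-(c * x / t))
        rw [show -(c * x) / t = -(c * x / t) by ring]
        linarith
      have hnn : 0 ≤ Ffun x t := by
        rw [hFfun_def]
        have : (0:ℝ) ≤ t ^ (ν - 1) := Real.rpow_nonneg ht0.le _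
        positivity
      rw [Real.norm_eq_abs, abs_of_nonneg hnn, hFfun_def]
      have key : t ^ (ν - 1) * Real.exp (-t) * (1 - Real.exp (-(c * x) / t))
          ≤ t ^ (ν - 1) * Real.exp (-t) * (c * x / t) := by
        refine mul_le_mul_of_nonneg_left h2 ?_
        have : (0:ℝ) ≤ t ^ (ν - 1) := Real.rpow_nonneg ht0.le _
        positivity
      have hsplit : t ^ (ν - 1) = t ^ (ν - 1 - 1) * t := by
        rw [← Real.rpow_add_one (ne_of_gt ht0)]
        congr 1
        ring
      have heq : t ^ (ν - 1) * Real.exp (-t) * (c * x / t) / x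
          = c * (Real.exp (-t) * t ^ (ν - 1 - 1)) := by
        rw [hsplit]
        field_simp
      calc t ^ (ν - 1) * Real.exp (-t) * (1 - Real.exp (-(c * x) / t)) / x
          ≤ t ^ (ν - 1) * Real.exp (-t) * (c * x / t) / x :=
            by gcongr
        _ = c * (Real.exp (-t) * t ^ (ν - 1 - 1)) := heq
    · exact (Real.GammaIntegral_convergent hν1').const_mul c
    · rw [ae_restrict_iff' measurableSet_Ioi]
      filter_upwards with t ht
      have ht0 : 0 < t := ht
      have hfun : (fun x : ℝ => -(c * x) / t) = fun x : ℝ => (-c / t) * x := by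
        funext x; ring
      have h1 : HasDerivAt (fun x : ℝ => -(c * x) / t) (-c / t) 0 := by
        rw [hfun]
        simpa using (hasDerivAt_id (0:ℝ)).const_mul (-c / t)
      have hder : HasDerivAt (fun x : ℝ => 1 - Real.exp (-(c * x) / t)) (c / t) 0 := by
        have h2 := (h1.exp).const_sub 1
        have h3 : -(Real.exp (-(c * (0:ℝ)) / t) * (-c / t)) = c / t := by
          rw [mul_zero, neg_zero, zero_div, Real.exp_zero, one_mul]
          ring
        rwa [h3] at h2
      have hslope := hasDerivAt_iff_tendsto_slope.mp hder
      have hslope' : Tendsto (slope (fun x : ℝ => 1 - Real.exp (-(c * x) / t)) 0)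
          (nhdsWithin 0 (Set.Ioi 0)) (nhds (c / t)) :=
        hslope.mono_left (nhdsWithin_mono 0 (fun x hx => ne_of_gt hx))
      have hmul : Tendsto (fun x => t ^ (ν - 1) * Real.exp (-t) *
          slope (fun x : ℝ => 1 - Real.exp (-(c * x) / t)) 0 x)
          (nhdsWithin 0 (Set.Ioi 0))
          (nhds (t ^ (ν - 1) * Real.exp (-t) * (c / t))) := hslope'.const_mul _
      have hsplit : t ^ (ν - 1) = t ^ (ν - 1 - 1) * t := by
        rw [← Real.rpow_add_one (ne_of_gt ht0)]
        congr 1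
        ring
      have heqlim : t ^ (ν - 1) * Real.exp (-t) * (c / t)
          = c * (Real.exp (-t) * t ^ (ν - 1 - 1)) := by
        rw [hsplit]
        field_simp
      rw [← heqlim]
      refine hmul.congr' ?_
      filter_upwards [self_mem_nhdsWithin] with x hx
      have hx0 : 0 < x := hx
      rw [slope_def_field, hFfun_def]
      simp only [mul_zero, neg_zero, zero_div, Real.exp_zero, sub_self, sub_zero]
      rw [mul_div_assoc]
  have hint : ∫ t in Ioi (0:ℝ), c * (Real.exp (-t) * t ^ (ν - 1 - 1))
      = c * Real.Gamma (ν - 1) := by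
    rw [integral_const_mul, ← Real.Gamma_eq_integral hν1']
  rw [hint] at hDC
  have hfinal := hDC.const_mul (Real.Gamma ν)⁻¹
  have hlimval : (Real.Gamma ν)⁻¹ * (c * Real.Gamma (ν - 1)) = c / (ν - 1) := by
    have hΓ : Real.Gamma ν = (ν - 1) * Real.Gamma (ν - 1) := by
      have h := Real.Gamma_add_one (s := ν - 1) (ne_of_gt hν1')
      rwa [sub_add_cancel] at h
    rw [hΓ]
    field_simp
  rw [hlimval] at hfinal
  refine hfinal.congr' ?_
  filter_upwards [self_mem_nhdsWithin] with x hx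
  have hx0 : 0 < x := hx
  have hax : 0 < c * x := mul_pos hc hx0
  have hpow : (c * x) ^ (ν / 2) = Real.sqrt (c * x) ^ ν := by
    rw [Real.sqrt_eq_rpow, ← Real.rpow_mul hax.le]
    congr 1
    ring
  have h1 : (c * x) ^ (ν / 2) * besselK ν (2 * Real.sqrt (c * x))
      = (1/2) * ∫ t in Ioi (0:ℝ), t ^ (ν - 1) * Real.exp (-t - (c * x) / t) := by
    rw [hpow]
    exact CascadedAux.key_identity ν hν1 hax
  set I₂ : ℝ := ∫ t in Ioi (0:ℝ), t ^ (ν - 1) * Real.exp (-t - (c * x) / t) with hI₂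
  set I₃ : ℝ := ∫ t in Ioi (0:ℝ),
    t ^ (ν - 1) * Real.exp (-t) * (1 - Real.exp (-(c * x) / t)) with hI₃
  have hsub : I₃ = Real.Gamma ν - I₂ := by
    rw [hI₃, hI₂, Real.Gamma_eq_integral hν0, ← integral_sub
      (Real.GammaIntegral_convergent hν0) (CascadedAux.phi_integrable ν hν0 hax)]
    refine setIntegral_congr_fun measurableSet_Ioi (fun t _ => ?_)
    rw [show -t - c * x / t = -t + -(c * x / t) by ring, Real.exp_add,
      show -(c * x) / t = -(c * x / t) by ring]
    ring
  have h4 : ∫ t in Ioi (0:ℝ), Ffun x t = I₃ / x := by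
    rw [hFfun_def, hI₃]
    exact integral_div x _
  rw [h4, hsub]
  have h2 : 1 - 2 / Real.Gamma ν * (c * x) ^ (ν / 2) * besselK ν (2 * Real.sqrt (c * x))
      = (Real.Gamma ν)⁻¹ * (Real.Gamma ν - I₂) := by
    rw [mul_assoc, h1]
    field_simp
  rw [h2]
  ring
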